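/- arXiv:2102.05873 — 2 statements merged into one kernel-verified Lean document; each statement's English description precedes it below -/
import Mathlib

section
/- Let ψ denote the digamma function. For real A > 0, s ∈ (0,1), and x ∈ (0, A), the sum S(x) := -ψ(A+1+s-x) + ψ(A+1-x) + ψ(A+s+x) - ψ(A+x) satisfies: S(x) > 0 if x < 1/2, S(1/2) = 0 (when 1/2 < A), and S(x) < 0 if x > 1/2. -/
open Real Filter Topology Finset

/-- The digamma function `ψ(z) = Γ'(z)/Γ(z) = (log Γ)'(z)`. -/
noncomputable def digamma (z : ℝ) : ℝ := deriv (fun y : ℝ => Real.log (Real.Gamma y)) z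

private lemma aux_min_le (a : ℝ) (m : ℕ) :
    min a 1 * (1 + (m : ℝ)) ≤ a + m := by
  have h1 : min a 1 ≤ a := min_le_left _ _
  have h2 : min a 1 ≤ 1 := min_le_right _ _
  have hm : (0:ℝ) ≤ m := Nat.cast_nonneg m
  nlinarith

private lemma summable_sq : Summable (fun m : ℕ => ((1 + (m:ℝ))^2)⁻¹) := by
  have h : Summable (fun m : ℕ => ((m:ℝ)^2)⁻¹) := by
    simpa [one_div] using summable_one_div_nat_pow.mpr (by norm_num : 1 < 2)
  have h2 := (summable_nat_add_iff 1).mpr h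
  refine h2.congr fun m => ?_
  push_cast
  ring_nf

private lemma summable_invmul (a b : ℝ) (ha : 0 < a) (hb : 0 < b) :
    Summable (fun m : ℕ => ((a + m) * (b + m))⁻¹) := by
  have hma : 0 < min a 1 := lt_min ha one_pos
  have hmb : 0 < min b 1 := lt_min hb one_pos
  refine Summable.of_nonneg_of_le (fun m => by positivity) (fun m => ?_)
    (summable_sq.mul_left ((min a 1 * min b 1)⁻¹))
  have hm : (0:ℝ) ≤ m := Nat.cast_nonneg m
  have h1 : min a 1 * min b 1 * (1 + (m:ℝ))^2 ≤ (a + m) * (b + m) := by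
    have := aux_min_le a m
    have := aux_min_le b m
    calc min a 1 * min b 1 * (1 + (m:ℝ))^2 = (min a 1 * (1 + (m:ℝ))) * (min b 1 * (1 + (m:ℝ))) := by ring
      _ ≤ (a + m) * (b + m) := by
          apply mul_le_mul (aux_min_le a m) (aux_min_le b m) (by positivity) (by linarith)
  have hpos : 0 < min a 1 * min b 1 * (1 + (m:ℝ))^2 := by positivity
  calc ((a + m) * (b + m))⁻¹ ≤ (min a 1 * min b 1 * (1 + (m:ℝ))^2)⁻¹ := by
        exact inv_anti₀ hpos h1
    _ = (min a 1 * min b 1)⁻¹ * ((1 + (m:ℝ))^2)⁻¹ := by rw [mul_inv]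

private lemma summable_diff (a b : ℝ) (ha : 0 < a) (hb : 0 < b) :
    Summable (fun m : ℕ => 1/(a + m) - 1/(b + m)) := by
  refine ((summable_invmul a b ha hb).mul_left (b - a)).congr fun m => ?_
  have hm : (0:ℝ) ≤ m := Nat.cast_nonneg m
  have h1 : a + (m:ℝ) ≠ 0 := by positivity
  have h2 : b + (m:ℝ) ≠ 0 := by positivity
  field_simp
  ring

private lemma hasDerivAt_logGamma {z : ℝ} (hz : 0 < z) :
    HasDerivAt (fun y : ℝ => Real.log (Real.Gamma y))
      (-Real.eulerMascheroniConstant + ∑' m : ℕ, (1/(1 + (m:ℝ)) - 1/(z + m))) z := by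
  set S : Set ℝ := Set.Ioo (z/2) (z+1) with hS
  have hzs : z ∈ S := ⟨by linarith, by linarith⟩
  have hso : IsOpen S := isOpen_Ioo
  set c : ℕ → ℝ := fun n => Real.log n - ∑ m ∈ range (n+1), 1/(1 + (m:ℝ)) with hc
  -- harmonic sums
  have hharm : ∀ n : ℕ, ∑ m ∈ range (n+1), 1/(1 + (m:ℝ)) = ((harmonic (n+1) : ℚ) : ℝ) := by
    intro n
    rw [harmonic]
    push_cast
    refine Finset.sum_congr rfl fun m _ => ?_
    rw [one_div, add_comm]
  -- limit of c
  have hlog : Tendsto (fun n : ℕ => Real.log (n+1) - Real.log n) atTop (𝓝 0) := by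
    have h1 : Tendsto (fun n : ℕ => Real.log (1 + 1/n)) atTop (𝓝 0) := by
      have h0 : Tendsto (fun n : ℕ => 1 + 1/(n:ℝ)) atTop (𝓝 1) := by
        simpa using (tendsto_const_nhds (x := (1:ℝ)) (f := atTop)).add tendsto_one_div_atTop_nhds_zero_nat
      have := ((Real.continuousAt_log (by norm_num : (1:ℝ) ≠ 0)).tendsto).comp h0
      simpa [Function.comp_def] using this
    refine Tendsto.congr' ?_ h1
    filter_upwards [eventually_gt_atTop 0] with n hn
    have hn' : (0:ℝ) < n := by exact_mod_cast hn
    rw [show (1:ℝ) + 1/n = (n+1)/n by field_simp, Real.log_div (by positivity) hn'.ne']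
  have hγ : Tendsto (fun n : ℕ => ((harmonic (n+1) : ℚ) : ℝ) - Real.log (n+1)) atTop
      (𝓝 Real.eulerMascheroniConstant) := by
    have := Real.tendsto_harmonic_sub_log.comp (tendsto_add_atTop_nat 1)
    refine this.congr fun n => ?_
    simp [Function.comp]
  have hcl : Tendsto c atTop (𝓝 (-Real.eulerMascheroniConstant)) := by
    have := (hγ.add hlog).neg
    rw [show -(Real.eulerMascheroniConstant + 0) = -Real.eulerMascheroniConstant by ring] at this
    refine this.congr fun n => ?_
    rw [hc]
    simp only [hharm n]
    ring
  -- the approximating functions and their derivatives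
  set F : ℕ → ℝ → ℝ := fun n x => Real.BohrMollerup.logGammaSeq x n with hF
  set F' : ℕ → ℝ → ℝ := fun n x => c n + ∑ m ∈ range (n+1), (1/(1 + (m:ℝ)) - 1/(x + m)) with hF'
  have hder : ∀ n : ℕ, ∀ x ∈ S, HasDerivAt (F n) (F' n x) x := by
    intro n x hx
    have hx0 : 0 < x := lt_trans (by linarith) hx.1
    have h2 : HasDerivAt (fun y : ℝ => ∑ m ∈ range (n+1), Real.log (y + m))
        (∑ m ∈ range (n+1), (x + (m:ℝ))⁻¹) x := by
      refine HasDerivAt.fun_sum fun m _ => ?_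
      have hne : x + (m:ℝ) ≠ 0 := by positivity
      have hid : HasDerivAt (fun y : ℝ => y + (m:ℝ)) 1 x := (hasDerivAt_id x).add_const _
      simpa [Function.comp_def] using (Real.hasDerivAt_log hne).comp x hid
    have h1 : HasDerivAt (fun y : ℝ => y * Real.log n + Real.log (Nat.factorial n)) (Real.log n) x := by
      simpa using ((hasDerivAt_id x).mul_const (Real.log n)).add_const (Real.log (Nat.factorial n))
    have h3 := h1.sub h2
    have hval : Real.log n - ∑ m ∈ range (n+1), (x + (m:ℝ))⁻¹ = F' n x := by
      simp only [hF', hc, Finset.sum_sub_distrib, one_div]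
      ring
    rw [hval] at h3
    refine h3.congr_of_eventuallyEq ?_
    filter_upwards with y
    rw [hF]
    simp only [Real.BohrMollerup.logGammaSeq]
    rfl
  -- uniform convergence of derivatives
  set φ : ℝ := ∑' m : ℕ, (1/(1 + (m:ℝ)) - 1/(z + m))
  have hmin : 0 < min (z/2) 1 := lt_min (by linarith) one_pos
  set C : ℝ := (z+2) * (min (z/2) 1)⁻¹ with hC
  have hbound : ∀ (m : ℕ) (x : ℝ), x ∈ S → ‖1/(1 + (m:ℝ)) - 1/(x + m)‖ ≤ C * ((1 + (m:ℝ))^2)⁻¹ := by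
    intro m x hx
    have hm : (0:ℝ) ≤ m := Nat.cast_nonneg m
    have hx0 : 0 < x := lt_trans (by linarith) hx.1
    have e : 1/(1 + (m:ℝ)) - 1/(x + m) = (x - 1) / ((1 + (m:ℝ)) * (x + m)) := by
      field_simp
      ring
    rw [Real.norm_eq_abs, e, abs_div, abs_of_pos (by positivity : (0:ℝ) < (1 + (m:ℝ)) * (x + m))]
    have habs : |x - 1| ≤ z + 2 := by
      rw [abs_le]
      constructor <;> [linarith [hx.1]; linarith [hx.2]]
    have hd : (1 + (m:ℝ)) * (min (z/2) 1 * (1 + m)) ≤ (1 + (m:ℝ)) * (x + m) := by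
      refine mul_le_mul_of_nonneg_left ?_ (by positivity)
      calc min (z/2) 1 * (1 + (m:ℝ)) ≤ z/2 + m := aux_min_le (z/2) m
        _ ≤ x + m := by linarith [hx.1]
    calc |x - 1| / ((1 + (m:ℝ)) * (x + m))
        ≤ (z + 2) / ((1 + (m:ℝ)) * (min (z/2) 1 * (1 + m))) :=
          div_le_div₀ (by linarith) habs (by positivity) hd
      _ = C * ((1 + (m:ℝ))^2)⁻¹ := by
          rw [hC, div_eq_mul_inv,
            show (1 + (m:ℝ)) * (min (z/2) 1 * (1 + (m:ℝ))) = min (z/2) 1 * (1 + (m:ℝ))^2 by ring,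
            mul_inv]
          ring
  have hsumC : Summable (fun m : ℕ => C * ((1 + (m:ℝ))^2)⁻¹) := summable_sq.mul_left C
  have huseries : TendstoUniformlyOn
      (fun n x => ∑ m ∈ range (n+1), (1/(1 + (m:ℝ)) - 1/(x + m)))
      (fun x => ∑' m : ℕ, (1/(1 + (m:ℝ)) - 1/(x + m))) atTop S := by
    have h := tendstoUniformlyOn_tsum_nat hsumC hbound
    intro u hu
    exact (tendsto_add_atTop_nat 1).eventually (h u hu)
  have hconst : TendstoUniformlyOn (fun n (_ : ℝ) => c n)
      (fun _ => -Real.eulerMascheroniConstant) atTop S :=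
    hcl.tendstoUniformlyOn_const S
  have huc : TendstoUniformlyOn (fun n x => F' n x)
      (fun x => -Real.eulerMascheroniConstant + ∑' m : ℕ, (1/(1 + (m:ℝ)) - 1/(x + m))) atTop S :=
    hconst.add huseries
  have hpt : ∀ x ∈ S, Tendsto (fun n => F n x) atTop (𝓝 (Real.log (Real.Gamma x))) := by
    intro x hx
    exact Real.BohrMollerup.tendsto_log_gamma (lt_trans (by linarith) hx.1)
  exact hasDerivAt_of_tendstoLocallyUniformlyOn hso huc.tendstoLocallyUniformlyOn
    (Filter.Eventually.of_forall hder) hpt hzs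

private lemma digamma_eq {z : ℝ} (hz : 0 < z) :
    digamma z = -Real.eulerMascheroniConstant + ∑' m : ℕ, (1/(1 + (m:ℝ)) - 1/(z + m)) :=
  (hasDerivAt_logGamma hz).deriv

private lemma digamma_sub {a b : ℝ} (ha : 0 < a) (hb : 0 < b) :
    digamma b - digamma a = ∑' m : ℕ, (1/(a + m) - 1/(b + m)) := by
  have h1 := summable_diff 1 b one_pos hb
  have h2 := summable_diff 1 a one_pos ha
  rw [digamma_eq hb, digamma_eq ha]
  have key : ∑' m : ℕ, (1/(a + (m:ℝ)) - 1/(b + m))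
      = ∑' m : ℕ, ((1/(1 + (m:ℝ)) - 1/(b + m)) - (1/(1 + (m:ℝ)) - 1/(a + m))) :=
    tsum_congr fun m => by ring
  rw [key, h1.tsum_sub h2]
  ring

theorem digamma_sum_sign (A s : ℝ) (hA : 0 < A) (hs0 : 0 < s) (hs1 : s < 1) :
    (∀ x : ℝ, 0 < x → x < A → x < 1 / 2 →
        0 < -digamma (A + 1 + s - x) + digamma (A + 1 - x) + digamma (A + s + x) - digamma (A + x)) ∧
    (1 / 2 < A →
        -digamma (A + 1 + s - 1 / 2) + digamma (A + 1 - 1 / 2) + digamma (A + s + 1 / 2)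
          - digamma (A + 1 / 2) = 0) ∧
    (∀ x : ℝ, 0 < x → x < A → 1 / 2 < x →
        -digamma (A + 1 + s - x) + digamma (A + 1 - x) + digamma (A + s + x) - digamma (A + x) < 0)
    := by
  -- pointwise term value for the combined series
  have termval : ∀ x : ℝ, 0 < x → x < A → ∀ m : ℕ,
      (1/(A + 1 + s - x + (m:ℝ)) - 1/(A + 1 - x + m)) + (1/(A + x + (m:ℝ)) - 1/(A + s + x + m))
        = ((1 - 2*x) * (s * (2*(A + m) + 1 + s)))
          / ((A + 1 + s - x + m) * ((A + 1 - x + m) * ((A + x + m) * (A + s + x + m)))) := by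
    intro x hx0 hxA m
    have hm : (0:ℝ) ≤ m := Nat.cast_nonneg m
    have h1 : (0:ℝ) < A + 1 + s - x + m := by linarith
    have h2 : (0:ℝ) < A + 1 - x + m := by linarith
    have h3 : (0:ℝ) < A + x + m := by linarith
    have h4 : (0:ℝ) < A + s + x + m := by linarith
    field_simp
    ring
  have key : ∀ x : ℝ, 0 < x → x < A →
      -digamma (A + 1 + s - x) + digamma (A + 1 - x) + digamma (A + s + x) - digamma (A + x)
        = ∑' m : ℕ, ((1/(A + 1 + s - x + (m:ℝ)) - 1/(A + 1 - x + m))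
            + (1/(A + x + (m:ℝ)) - 1/(A + s + x + m))) := by
    intro x hx0 hxA
    have h1 : (0:ℝ) < A + 1 + s - x := by linarith
    have h2 : (0:ℝ) < A + 1 - x := by linarith
    have h3 : (0:ℝ) < A + x := by linarith
    have h4 : (0:ℝ) < A + s + x := by linarith
    have e1 := digamma_sub h1 h2
    have e2 := digamma_sub h3 h4
    have hsum1 := summable_diff _ _ h1 h2
    have hsum2 := summable_diff _ _ h3 h4
    rw [hsum1.tsum_add hsum2, ← e1, ← e2]
    ring
  refine ⟨?_, ?_, ?_⟩
  · -- x < 1/2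
    intro x hx0 hxA hx2
    have hsum : Summable (fun m : ℕ =>
        (1/(A + 1 + s - x + (m:ℝ)) - 1/(A + 1 - x + m))
          + (1/(A + x + (m:ℝ)) - 1/(A + s + x + m))) :=
      (summable_diff _ _ (by linarith) (by linarith)).add
        (summable_diff _ _ (by linarith) (by linarith))
    have hpos : ∀ m : ℕ, 0 < (1/(A + 1 + s - x + (m:ℝ)) - 1/(A + 1 - x + m))
        + (1/(A + x + (m:ℝ)) - 1/(A + s + x + m)) := by
      intro m
      rw [termval x hx0 hxA m]
      have hm : (0:ℝ) ≤ m := Nat.cast_nonneg m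
      apply div_pos
      · apply mul_pos (by linarith)
        apply mul_pos hs0 (by linarith)
      · exact mul_pos (by linarith) (mul_pos (by linarith) (mul_pos (by linarith) (by linarith)))
    rw [key x hx0 hxA]
    exact hsum.tsum_pos (fun m => (hpos m).le) 0 (hpos 0)
  · -- x = 1/2
    intro _
    rw [show A + 1 + s - 1/2 = A + s + 1/2 by ring, show A + 1 - 1/2 = A + 1/2 by ring]
    ring
  · -- x > 1/2
    intro x hx0 hxA hx2
    have hsum : Summable (fun m : ℕ =>
        (1/(A + 1 + s - x + (m:ℝ)) - 1/(A + 1 - x + m))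
          + (1/(A + x + (m:ℝ)) - 1/(A + s + x + m))) :=
      (summable_diff _ _ (by linarith) (by linarith)).add
        (summable_diff _ _ (by linarith) (by linarith))
    have hneg : ∀ m : ℕ, 0 < -((1/(A + 1 + s - x + (m:ℝ)) - 1/(A + 1 - x + m))
        + (1/(A + x + (m:ℝ)) - 1/(A + s + x + m))) := by
      intro m
      rw [termval x hx0 hxA m, neg_pos]
      have hm : (0:ℝ) ≤ m := Nat.cast_nonneg m
      apply div_neg_of_neg_of_pos
      · apply mul_neg_of_neg_of_pos (by linarith)
        apply mul_pos hs0 (by linarith)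
      · exact mul_pos (by linarith) (mul_pos (by linarith) (mul_pos (by linarith) (by linarith)))
    have h0 : 0 < ∑' m : ℕ, -((1/(A + 1 + s - x + (m:ℝ)) - 1/(A + 1 - x + m))
        + (1/(A + x + (m:ℝ)) - 1/(A + s + x + m))) :=
      hsum.neg.tsum_pos (fun m => (hneg m).le) 0 (hneg 0)
    rw [tsum_neg] at h0
    rw [key x hx0 hxA]
    linarith
end

section
/- Let ψ be the digamma function, let ℓ > -2, 0 < s < 1 with s > -ℓ/2, and N ≥ 2 real. Then ∂H_ℓ/∂N (s,N) := (1/2)[ψ(N/2) - ψ((N-2s)/2) - ψ((N+2s)/4) + ψ((N-2s)/4)] < 0. -/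
lemma hasDerivAt_logGamma_s13 {x : ℝ} (hx : 0 < x) :
    HasDerivAt (fun y : ℝ => Real.log (Real.Gamma y)) (digamma x) x := by
  have hd : DifferentiableAt ℝ Real.Gamma x := by
    refine Real.differentiableAt_Gamma (fun m => ?_)
    have : (0:ℝ) ≤ m := Nat.cast_nonneg m
    intro h; rw [h] at hx; linarith
  have hne : Real.Gamma x ≠ 0 := (Real.Gamma_pos_of_pos hx).ne'
  exact (hd.log hne).hasDerivAt

lemma digamma_add_one {x : ℝ} (hx : 0 < x) : digamma (x + 1) = digamma x + 1 / x := by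
  have h1 : HasDerivAt (fun y : ℝ => Real.log (Real.Gamma (y + 1)))
      (digamma (x + 1)) x := by
    have := (hasDerivAt_logGamma_s13 (by linarith : (0:ℝ) < x + 1)).comp x
      ((hasDerivAt_id x).add_const 1)
    simpa [Function.comp_def] using this
  have h2 : HasDerivAt (fun y : ℝ => Real.log (Real.Gamma y) + Real.log y)
      (digamma x + 1 / x) x := by
    have := (hasDerivAt_logGamma_s13 hx).add (Real.hasDerivAt_log hx.ne')
    rw [one_div]; exact this
  have heq : (fun y : ℝ => Real.log (Real.Gamma (y + 1)))
      =ᶠ[nhds x] (fun y : ℝ => Real.log (Real.Gamma y) + Real.log y) := by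
    filter_upwards [eventually_gt_nhds hx] with y hy
    rw [Real.Gamma_add_one hy.ne', Real.log_mul hy.ne' (Real.Gamma_pos_of_pos hy).ne']
    ring
  have h1' : HasDerivAt (fun y : ℝ => Real.log (Real.Gamma y) + Real.log y)
      (digamma (x + 1)) x := h1.congr_of_eventuallyEq heq.symm
  exact h1'.unique h2

lemma digamma_monotone : MonotoneOn digamma (Set.Ioi (0:ℝ)) := by
  have h := Real.convexOn_log_Gamma.monotoneOn_deriv
    (fun x hx => (hasDerivAt_logGamma_s13 hx).differentiableAt)
  intro x hx y hy hxy
  have := h hx hy hxy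
  exact this

lemma digamma_diff_nonneg {x s : ℝ} (hx : 0 < x) (hs : 0 ≤ s) :
    0 ≤ digamma (x + s) - digamma x := by
  have := digamma_monotone (Set.mem_Ioi.2 hx) (Set.mem_Ioi.2 (by linarith : 0 < x + s))
    (by linarith)
  linarith

lemma digamma_diff_le {x s : ℝ} (hx : 0 < x) (hs0 : 0 < s) (hs : s ≤ 1) :
    digamma (x + s) - digamma x ≤ 1 / x := by
  have h := digamma_monotone (Set.mem_Ioi.2 (by linarith : 0 < x + s))
    (Set.mem_Ioi.2 (by linarith : 0 < x + 1)) (by linarith)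
  have := digamma_add_one hx
  linarith

/-- Telescoping: D(x) = D(x+n) + Σ_{k<n} (1/(x+k) - 1/(x+s+k)). -/
lemma digamma_diff_telescope {s : ℝ} (hs : 0 < s) (n : ℕ) :
    ∀ {x : ℝ}, 0 < x →
      digamma (x + s) - digamma x =
        (digamma ((x + n) + s) - digamma (x + n)) +
          ∑ k ∈ Finset.range n, (1 / (x + k) - 1 / (x + s + k)) := by
  induction n with
  | zero => intro x hx; simp
  | succ n ih =>
      intro x hx
      have hx1 : 0 < x + 1 := by linarith
      have key : digamma (x + s) - digamma x =
          (digamma ((x + 1) + s) - digamma (x + 1)) + (1 / x - 1 / (x + s)) := by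
        have h1 : digamma ((x + s) + 1) = digamma (x + s) + 1 / (x + s) :=
          digamma_add_one (by linarith)
        have h2 : digamma (x + 1) = digamma x + 1 / x := digamma_add_one hx
        have : (x + 1) + s = (x + s) + 1 := by ring
        rw [this, h1, h2]; ring
      have ihx := ih hx1
      rw [key, ihx, Finset.sum_range_succ']
      have e1 : ((x + 1) + n : ℝ) = x + (n + 1 : ℕ) := by push_cast; ring
      rw [e1]
      have e2 : ∀ k ∈ Finset.range n, (1 / ((x+1) + k) - 1 / ((x+1) + s + k) : ℝ)
          = 1 / (x + (k + 1 : ℕ)) - 1 / (x + s + (k + 1 : ℕ)) := by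
        intro k _; push_cast; ring_nf
      rw [Finset.sum_congr rfl e2]
      push_cast
      ring

lemma digamma_diff_strict_anti {s a b : ℝ} (hs0 : 0 < s) (hs1 : s < 1)
    (ha : 0 < a) (hab : a < b) :
    digamma (b + s) - digamma b < digamma (a + s) - digamma a := by
  have hb : 0 < b := lt_trans ha hab
  set c : ℝ := (1 / a - 1 / (a + s)) - (1 / b - 1 / (b + s)) with hc
  have hcpos : 0 < c := by
    rw [hc]
    have h1 : 1 / a - 1 / (a + s) = s / (a * (a + s)) := by
      field_simp
      ring
    have h2 : 1 / b - 1 / (b + s) = s / (b * (b + s)) := by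
      field_simp
      ring
    rw [h1, h2]
    have : b * (b + s) > a * (a + s) := by nlinarith
    have ha' : 0 < a * (a + s) := by positivity
    exact sub_pos.2 (div_lt_div_of_pos_left hs0 (by positivity) this)
  -- For every n ≥ 1 : D a - D b ≥ c - 1/(b+n)
  have key : ∀ n : ℕ, 1 ≤ n →
      (digamma (a + s) - digamma a) - (digamma (b + s) - digamma b)
        ≥ c - 1 / (b + n) := by
    intro n hn
    have ta := digamma_diff_telescope hs0 n ha
    have tb := digamma_diff_telescope hs0 n hb
    have hsumab : ∑ k ∈ Finset.range n, (1 / (a + k) - 1 / (a + s + k))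
        - ∑ k ∈ Finset.range n, (1 / (b + k) - 1 / (b + s + k)) ≥ c := by
      rw [← Finset.sum_sub_distrib]
      have h0 : (0:ℕ) ∈ Finset.range n := Finset.mem_range.2 hn
      have hterm : ∀ k ∈ Finset.range n,
          (0:ℝ) ≤ (1 / (a + k) - 1 / (a + s + k)) - (1 / (b + k) - 1 / (b + s + k)) := by
        intro k _
        have hak : (0:ℝ) < a + k := by positivity
        have hbk : (0:ℝ) < b + k := by
          have : (0:ℝ) ≤ (k:ℝ) := Nat.cast_nonneg k
          linarith
        have hask : (0:ℝ) < a + s + k := by positivity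
        have hbsk : (0:ℝ) < b + s + k := by
          have : (0:ℝ) ≤ (k:ℝ) := Nat.cast_nonneg k
          linarith
        have h1 : 1 / (a + k) - 1 / (a + s + k) = s / ((a+k) * (a + k + s)) := by
          rw [one_div, one_div, inv_sub_inv hak.ne' hask.ne']
          congr 1 <;> ring
        have h2 : 1 / (b + k) - 1 / (b + s + k) = s / ((b+k) * (b + k + s)) := by
          rw [one_div, one_div, inv_sub_inv hbk.ne' hbsk.ne']
          congr 1 <;> ring
        rw [h1, h2]
        have hlt : (a+k) * (a + k + s) < (b+k) * (b + k + s) := by nlinarith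
        exact sub_nonneg.2
          (div_le_div_of_nonneg_left hs0.le
            (by positivity : (0:ℝ) < (a+k)*(a+k+s)) hlt.le)
      calc ∑ k ∈ Finset.range n,
            ((1 / (a + k) - 1 / (a + s + k)) - (1 / (b + k) - 1 / (b + s + k)))
          ≥ (1 / (a + (0:ℕ)) - 1 / (a + s + (0:ℕ)))
            - (1 / (b + (0:ℕ)) - 1 / (b + s + (0:ℕ))) :=
            Finset.single_le_sum hterm h0
        _ = c := by push_cast; rw [hc]; ring
    have hDa : 0 ≤ digamma ((a + n) + s) - digamma (a + n) :=
      digamma_diff_nonneg (by positivity) hs0.le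
    have hDb : digamma ((b + n) + s) - digamma (b + n) ≤ 1 / (b + n) := by
      have hbn : (0:ℝ) < b + n := by
        have : (0:ℝ) ≤ (n:ℝ) := Nat.cast_nonneg n
        linarith
      exact digamma_diff_le hbn hs0 hs1.le
    rw [ta, tb]
    linarith
  -- take the limit n → ∞
  have hlim : Filter.Tendsto (fun n : ℕ => c - 1 / (b + n)) Filter.atTop
      (nhds (c - 0)) := by
    refine Filter.Tendsto.const_sub c ?_
    have : Filter.Tendsto (fun n : ℕ => b + (n:ℝ)) Filter.atTop Filter.atTop :=
      Filter.tendsto_atTop_add_const_left _ b tendsto_natCast_atTop_atTop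
    simp only [one_div]; exact this.inv_tendsto_atTop
  have hge : c - 0 ≤ (digamma (a + s) - digamma a) - (digamma (b + s) - digamma b) := by
    refine le_of_tendsto hlim ?_
    filter_upwards [Filter.eventually_ge_atTop 1] with n hn using key n hn
  linarith

theorem partial_H_N_neg (ℓ s N : ℝ) (hℓ : -2 < ℓ) (hs0 : 0 < s) (hs1 : s < 1)
    (hsℓ : -ℓ / 2 < s) (hN : 2 ≤ N) :
    (1 / 2) * (digamma (N / 2) - digamma ((N - 2 * s) / 2) - digamma ((N + 2 * s) / 4)
      + digamma ((N - 2 * s) / 4)) < 0 := by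
  set a : ℝ := (N - 2 * s) / 4 with ha_def
  have ha : 0 < a := by rw [ha_def]; linarith
  have key := digamma_diff_strict_anti hs0 hs1 ha (by linarith : a < 2 * a)
  have e1 : 2 * a + s = N / 2 := by rw [ha_def]; ring
  have e2 : (2 : ℝ) * a = (N - 2 * s) / 2 := by rw [ha_def]; ring
  have e3 : a + s = (N + 2 * s) / 4 := by rw [ha_def]; ring
  rw [e1, e2, e3] at key
  linarith
end
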